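/- Fix an impulse time sequence and consider the impulsive system with inputs and outputs determined by continuous bounded maps Ã, Ẽ_c, C̃_c, F̃_c and bounded sequences J̃(k), Ẽ_d(k), C̃_d(k), F̃_d(k), where Ã(t) is Metzler and Ẽ_c(t), C̃_c(t), F̃_c(t) ≥ 0 for all t, and J̃(k), Ẽ_d(k), C̃_d(k), F̃_d(k) ≥ 0 for all k ≥ 1. Suppose there exist vectors 0 < χ̄₁ ≤ χ̄₂, scalars ε > 0 and γ > 0, and a function χ : [t_0,∞) → ℝ^n, piecewise-C¹ along the impulse sequence, with χ̄₁ ≤ χ(t) ≤ χ̄₂ for all t, satisfying: χ̇(t)ᵀ + χ(t)ᵀÃ(t) + 𝟙ᵀC̃_c(t) ≤ −ε𝟙ᵀ at every t in the interiors of the flow intervals; χ(t_k⁺)ᵀJ̃(k) − χ(t_k)ᵀ + 𝟙ᵀC̃_d(k) ≤ −ε𝟙ᵀ for all k ≥ 1; χ(t)ᵀẼ_c(t) + 𝟙ᵀF̃_c(t) − γ𝟙ᵀ ≤ −ε𝟙ᵀ for all t ≥ t_0; and χ(t_k⁺)ᵀẼ_d(k) + 𝟙ᵀF̃_d(k) −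 γ𝟙ᵀ ≤ −ε𝟙ᵀ for all k ≥ 1. Then: (i) there exist M > 0, α > 0 and ρ ∈ (0,1) such that every trajectory of the homogeneous system satisfies ‖x(t)‖_1 ≤ M ρ^{κ(t,t_0)} e^{−α(t−t_0)} ‖x(t_0)‖_1 for all t ≥ t_0; and (ii) every trajectory with x(t_0) = 0 and nonnegative inputs with ∫_{t_0}^∞ 𝟙ᵀw_c(t) dt < ∞ and Σ_{k≥1} 𝟙ᵀw_d(k) < ∞ satisfies ∫_{t_0}^∞ 𝟙ᵀz_c(t) dt + Σ_{k≥1} 𝟙ᵀz_d(k) ≤ γ (∫_{t_0}^∞ 𝟙ᵀw_c(t) dt + Σ_{k≥1} 𝟙ᵀw_d(k)). -/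

import Mathlib

open Matrix Filter Set Topology

/-- A square real matrix is Metzler if all its off-diagonal entries are nonnegative. -/
def Metzler {n : ℕ} (A : Matrix (Fin n) (Fin n) ℝ) : Prop :=
  ∀ i j, i ≠ j → 0 ≤ A i j

/-- An impulse time sequence: `t 0` is the initial time `t₀`, the `t k` for `k ≥ 1` are the
impulse times; the sequence is strictly increasing and tends to infinity. -/
structure ImpulseSeq where
  t : ℕ → ℝ
  t0_nonneg : 0 ≤ t 0
  mono : StrictMono t
  tendsto_atTop : Filter.Tendsto t Filter.atTop Filter.atTop

/-- `κ(t,s)`: the number of impulse instants `t_k`, `k ≥ 1`, with `s ≤ t_k < t`. -/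
noncomputable def ImpulseSeq.kappa (σ : ImpulseSeq) (s u : ℝ) : ℕ :=
  Set.ncard {k : ℕ | 1 ≤ k ∧ s ≤ σ.t k ∧ σ.t k < u}

/-- A trajectory of the homogeneous impulsive system `ẋ = Ã(t)x`, `x(t_k⁺) = J̃(k)x(t_k)`. -/
def IsHomTrajectory {n : ℕ} (σ : ImpulseSeq)
    (At : ℝ → Matrix (Fin n) (Fin n) ℝ) (J : ℕ → Matrix (Fin n) (Fin n) ℝ)
    (x : ℝ → Fin n → ℝ) : Prop :=
  (∀ k, ContinuousOn x (Set.Ioc (σ.t k) (σ.t (k + 1)))) ∧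
  (∀ k, ∀ s ∈ Set.Ioo (σ.t k) (σ.t (k + 1)), HasDerivAt x (At s *ᵥ x s) s) ∧
  ContinuousWithinAt x (Set.Ici (σ.t 0)) (σ.t 0) ∧
  (∀ k, 1 ≤ k →
    Filter.Tendsto x (nhdsWithin (σ.t k) (Set.Ioi (σ.t k))) (nhds (J k *ᵥ x (σ.t k))))

/-- A function `f` is piecewise-C¹ along the impulse sequence, with derivative `f'` on the
interiors of the flow intervals and right limits `fplus k = f(t_k⁺)` at the impulse times. -/
def PiecewiseC1 {n : ℕ} (σ : ImpulseSeq)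
    (f f' : ℝ → Fin n → ℝ) (fplus : ℕ → Fin n → ℝ) : Prop :=
  (∀ k, ContinuousOn f (Set.Ioc (σ.t k) (σ.t (k + 1)))) ∧
  (∀ k, ∀ s ∈ Set.Ioo (σ.t k) (σ.t (k + 1)), HasDerivAt f (f' s) s) ∧
  (∀ k, ContinuousOn f' (Set.Ioo (σ.t k) (σ.t (k + 1)))) ∧
  ContinuousWithinAt f (Set.Ici (σ.t 0)) (σ.t 0) ∧
  (∀ k, 1 ≤ k →
    Filter.Tendsto f (nhdsWithin (σ.t k) (Set.Ioi (σ.t k))) (nhds (fplus k)))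

open MeasureTheory

/-- The 1-norm `‖v‖₁ = Σᵢ |vᵢ|` of a vector. -/
def norm1 {n : ℕ} (v : Fin n → ℝ) : ℝ := ∑ i, |v i|

/-- A trajectory of the linear impulsive system with inputs. -/
def IsTrajectory {n pc pd : ℕ} (σ : ImpulseSeq)
    (At : ℝ → Matrix (Fin n) (Fin n) ℝ) (Ec : ℝ → Matrix (Fin n) (Fin pc) ℝ)
    (J : ℕ → Matrix (Fin n) (Fin n) ℝ) (Ed : ℕ → Matrix (Fin n) (Fin pd) ℝ)
    (wc : ℝ → Fin pc → ℝ) (wd : ℕ → Fin pd → ℝ)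
    (x : ℝ → Fin n → ℝ) : Prop :=
  (∀ k, ContinuousOn x (Set.Ioc (σ.t k) (σ.t (k + 1)))) ∧
  (∀ k, ∀ s ∈ Set.Ioo (σ.t k) (σ.t (k + 1)),
    HasDerivAt x (At s *ᵥ x s + Ec s *ᵥ wc s) s) ∧
  ContinuousWithinAt x (Set.Ici (σ.t 0)) (σ.t 0) ∧
  (∀ k, 1 ≤ k →
    Filter.Tendsto x (nhdsWithin (σ.t k) (Set.Ioi (σ.t k)))
      (nhds (J k *ᵥ x (σ.t k) + Ed k *ᵥ wd k)))


section Aux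
open Matrix Filter Set Topology MeasureTheory

noncomputable def dabs (a d : ℝ) : ℝ := if a = 0 then |d| else if 0 < a then d else -d

lemma dabs_add_le (a d : ℝ) {e : ℝ} (he : 0 ≤ e) : dabs a (d + e) ≤ dabs a d + e := by
  unfold dabs
  split_ifs with h1 h2
  · calc |d + e| ≤ |d| + |e| := abs_add_le _ _
      _ = |d| + e := by rw [abs_of_nonneg he]
  · exact le_refl _
  · linarith

/-- Right-sided difference quotient of `|f|` converges to `dabs (f t) d`. -/
lemma tendsto_slope_abs {f : ℝ → ℝ} {t d : ℝ} (hf : HasDerivAt f d t) :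
    Tendsto (fun z => (|f z| - |f t|) / (z - t)) (𝓝[>] t) (𝓝 (dabs (f t) d)) := by
  have hmono : 𝓝[>] t ≤ 𝓝[≠] t := nhdsWithin_mono t (fun z hz => ne_of_gt hz)
  have hslope : Tendsto (fun z => (f z - f t) / (z - t)) (𝓝[>] t) (𝓝 d) := by
    refine ((hasDerivAt_iff_tendsto_slope.mp hf).mono_left hmono).congr (fun z => ?_)
    rw [slope_def_field]
  have hcont : Tendsto f (𝓝[>] t) (𝓝 (f t)) :=
    (hf.continuousAt.tendsto).mono_left nhdsWithin_le_nhds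
  rcases lt_trichotomy (f t) 0 with h | h | h
  · rw [show dabs (f t) d = -d by simp [dabs, h.ne, not_lt.mpr h.le]]
    have hev : ∀ᶠ z in 𝓝[>] t, f z < 0 := hcont (Iio_mem_nhds h)
    have h2 : Tendsto (fun z => -((f z - f t) / (z - t))) (𝓝[>] t) (𝓝 (-d)) := hslope.neg
    refine h2.congr' (hev.mono fun z hz => ?_)
    show _ = (|f z| - |f t|) / (z - t)
    rw [abs_of_neg hz, abs_of_neg h]; ring
  · have hev : ∀ᶠ z in 𝓝[>] t, (|f z| - |f t|) / (z - t) = |(f z - f t) / (z - t)| := by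
      refine eventually_mem_nhdsWithin.mono fun z hz => ?_
      have hz' : (0:ℝ) < z - t := sub_pos.mpr hz
      rw [h, sub_zero, abs_zero, sub_zero, abs_div, abs_of_pos hz']
    rw [show dabs (f t) d = |d| by simp [dabs, h]]
    exact hslope.abs.congr' (hev.mono fun z hz => hz.symm)
  · rw [show dabs (f t) d = d by simp [dabs, h.ne', h]]
    have hev : ∀ᶠ z in 𝓝[>] t, 0 < f z := hcont (Ioi_mem_nhds h)
    refine hslope.congr' (hev.mono fun z hz => ?_)
    show _ = (|f z| - |f t|) / (z - t)
    rw [abs_of_pos hz, abs_of_pos h]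

/-- difference quotient of `V(z) = ∑ χ z i * |x z i|`. -/
lemma tendsto_slope_V {n : ℕ} {χ x : ℝ → Fin n → ℝ} {c v : Fin n → ℝ} {t : ℝ}
    (hχ : HasDerivAt χ c t) (hx : HasDerivAt x v t) :
    Tendsto (fun z => ((∑ i, χ z i * |x z i|) - ∑ i, χ t i * |x t i|) / (z - t)) (𝓝[>] t)
      (𝓝 (∑ i, (c i * |x t i| + χ t i * dabs (x t i) (v i)))) := by
  have key : ∀ i : Fin n, Tendsto
      (fun z => (χ z i * |x z i| - χ t i * |x t i|) / (z - t)) (𝓝[>] t)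
      (𝓝 (c i * |x t i| + χ t i * dabs (x t i) (v i))) := by
    intro i
    have hχi := hasDerivAt_pi.mp hχ i
    have hxi := hasDerivAt_pi.mp hx i
    have h1 : Tendsto (fun z => χ z i) (𝓝[>] t) (𝓝 (χ t i)) :=
      hχi.continuousAt.tendsto.mono_left nhdsWithin_le_nhds
    have h2 := tendsto_slope_abs hxi
    have h3 : Tendsto (fun z => (χ z i - χ t i) / (z - t)) (𝓝[>] t) (𝓝 (c i)) := by
      refine ((hasDerivAt_iff_tendsto_slope.mp hχi).mono_left
        (nhdsWithin_mono t (fun z hz => ne_of_gt hz))).congr (fun z => ?_)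
      rw [slope_def_field]
    have h4 : Tendsto (fun z => ((χ z i - χ t i) / (z - t)) * |x t i|
        + χ z i * ((|x z i| - |x t i|) / (z - t))) (𝓝[>] t)
        (𝓝 (c i * |x t i| + χ t i * dabs (x t i) (v i))) :=
      (h3.mul (tendsto_const_nhds (x := |x t i|))).add (h1.mul h2)
    refine h4.congr (fun z => ?_)
    ring
  have hsum := tendsto_finset_sum Finset.univ (fun i (_ : i ∈ Finset.univ) => key i)
  refine hsum.congr (fun z => ?_)
  rw [← Finset.sum_div, ← Finset.sum_sub_distrib]

lemma dabs_mulVec_le {n : ℕ} {A : Matrix (Fin n) (Fin n) ℝ} (hA : Metzler A)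
    (x : Fin n → ℝ) (i : Fin n) :
    dabs (x i) ((A *ᵥ x) i) ≤ (A *ᵥ fun j => |x j|) i := by
  have hmv : ∀ v : Fin n → ℝ, (A *ᵥ v) i = ∑ j, A i j * v j := by
    intro v; simp [Matrix.mulVec, dotProduct]
  rw [hmv, hmv]
  have key : ∀ j, (if x i = 0 then |A i j * x j| else
      if 0 < x i then A i j * x j else -(A i j * x j)) ≤ A i j * |x j| := by
    intro j
    rcases eq_or_ne j i with rfl | hne
    · split_ifs with h1 h2
      · simp [h1]
      · rw [abs_of_pos h2]
      · push_neg at h1 h2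
        rw [abs_of_neg (lt_of_le_of_ne h2 h1)]; ring_nf; exact le_refl _
    · have hAij : 0 ≤ A i j := hA i j (Ne.symm hne)
      split_ifs
      · rw [abs_mul, abs_of_nonneg hAij]
      · exact mul_le_mul_of_nonneg_left (le_abs_self _) hAij
      · rw [show -(A i j * x j) = A i j * (-x j) by ring]
        exact mul_le_mul_of_nonneg_left (neg_le_abs _) hAij
  unfold dabs
  split_ifs with h1 h2
  · calc |∑ j, A i j * x j| ≤ ∑ j, |A i j * x j| := Finset.abs_sum_le_sum_abs _ _
      _ ≤ ∑ j, A i j * |x j| := by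
        refine Finset.sum_le_sum fun j _ => ?_
        have := key j; simpa [h1] using this
  · refine Finset.sum_le_sum fun j _ => ?_
    have := key j; simpa [h1, h2] using this
  · rw [← Finset.sum_neg_distrib]
    refine Finset.sum_le_sum fun j _ => ?_
    have := key j; simpa [h1, h2] using this

lemma sum_mul_mulVec {a b : ℕ} (M : Matrix (Fin a) (Fin b) ℝ) (u : Fin a → ℝ) (v : Fin b → ℝ) :
    ∑ i, u i * (M *ᵥ v) i = ∑ j, (u ᵥ* M) j * v j := by
  have := dotProduct_mulVec u M v
  simpa [dotProduct] using this

lemma sum_mulVec_eq {a b : ℕ} (M : Matrix (Fin a) (Fin b) ℝ) (v : Fin b → ℝ) :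
    ∑ i, (M *ᵥ v) i = ∑ j, ((fun _ => (1:ℝ)) ᵥ* M) j * v j := by
  have := sum_mul_mulVec M (fun _ => (1:ℝ)) v
  simpa using this

lemma ones_vecMul_nonneg {a b : ℕ} (M : Matrix (Fin a) (Fin b) ℝ)
    (hM : ∀ i j, 0 ≤ M i j) (j : Fin b) : 0 ≤ ((fun _ => (1:ℝ)) ᵥ* M) j := by
  simp only [Matrix.vecMul, dotProduct, one_mul]
  exact Finset.sum_nonneg fun i _ => hM i j

lemma abs_mulVec_le {a b : ℕ} (M : Matrix (Fin a) (Fin b) ℝ)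
    (hM : ∀ i j, 0 ≤ M i j) (x : Fin b → ℝ) (i : Fin a) :
    |(M *ᵥ x) i| ≤ (M *ᵥ fun j => |x j|) i := by
  simp only [Matrix.mulVec, dotProduct]
  calc |∑ j, M i j * x j| ≤ ∑ j, |M i j * x j| := Finset.abs_sum_le_sum_abs _ _
    _ ≤ ∑ j, M i j * |x j| := by
      refine Finset.sum_le_sum fun j _ => ?_
      rw [abs_mul, abs_of_nonneg (hM i j)]

lemma mulVec_nonneg {a b : ℕ} (M : Matrix (Fin a) (Fin b) ℝ)
    (hM : ∀ i j, 0 ≤ M i j) {w : Fin b → ℝ} (hw : ∀ j, 0 ≤ w j) (i : Fin a) :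
    0 ≤ (M *ᵥ w) i := by
  simp only [Matrix.mulVec, dotProduct]
  exact Finset.sum_nonneg fun j _ => mul_nonneg (hM i j) (hw j)

lemma abs_mulVec_add_le {a b c : ℕ} (M : Matrix (Fin a) (Fin b) ℝ) (E : Matrix (Fin a) (Fin c) ℝ)
    (hM : ∀ i j, 0 ≤ M i j) (hE : ∀ i j, 0 ≤ E i j) (x : Fin b → ℝ) (w : Fin c → ℝ)
    (hw : ∀ j, 0 ≤ w j) (i : Fin a) :
    |(M *ᵥ x + E *ᵥ w) i| ≤ (M *ᵥ fun j => |x j|) i + (E *ᵥ w) i := by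
  have h1 := abs_mulVec_le M hM x i
  have h2 : 0 ≤ (E *ᵥ w) i := mulVec_nonneg E hE hw i
  calc |(M *ᵥ x + E *ᵥ w) i| ≤ |(M *ᵥ x) i| + |(E *ᵥ w) i| := by
        simpa using abs_add_le ((M *ᵥ x) i) ((E *ᵥ w) i)
    _ ≤ (M *ᵥ fun j => |x j|) i + (E *ᵥ w) i := by
        rw [abs_of_nonneg h2]; exact add_le_add_left h1 _

lemma jump_est {n pd : ℕ} {χp xk : Fin n → ℝ} {J : Matrix (Fin n) (Fin n) ℝ}
    {Ed : Matrix (Fin n) (Fin pd) ℝ} {w : Fin pd → ℝ} {aJ : Fin n → ℝ} {aF : Fin pd → ℝ}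
    (hJ : ∀ i j, 0 ≤ J i j) (hEd : ∀ i j, 0 ≤ Ed i j) (hw : ∀ j, 0 ≤ w j)
    (hχp : ∀ i, 0 ≤ χp i)
    (hbJ : ∀ j, (χp ᵥ* J) j ≤ aJ j) (hbE : ∀ j, (χp ᵥ* Ed) j ≤ aF j) :
    ∑ i, χp i * |(J *ᵥ xk + Ed *ᵥ w) i| ≤ ∑ j, aJ j * |xk j| + ∑ j, aF j * w j := by
  calc ∑ i, χp i * |(J *ᵥ xk + Ed *ᵥ w) i|
      ≤ ∑ i, χp i * ((J *ᵥ fun j => |xk j|) i + (Ed *ᵥ w) i) :=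
        Finset.sum_le_sum fun i _ => mul_le_mul_of_nonneg_left
          (abs_mulVec_add_le J Ed hJ hEd xk w hw i) (hχp i)
    _ = ∑ i, χp i * (J *ᵥ fun j => |xk j|) i + ∑ i, χp i * (Ed *ᵥ w) i := by
        rw [← Finset.sum_add_distrib]; congr 1; ext i; ring
    _ = ∑ j, (χp ᵥ* J) j * |xk j| + ∑ j, (χp ᵥ* Ed) j * w j := by
        rw [sum_mul_mulVec, sum_mul_mulVec]
    _ ≤ ∑ j, aJ j * |xk j| + ∑ j, aF j * w j := by
        refine add_le_add (Finset.sum_le_sum fun j _ => ?_) (Finset.sum_le_sum fun j _ => ?_)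
        · exact mul_le_mul_of_nonneg_right (hbJ j) (abs_nonneg _)
        · exact mul_le_mul_of_nonneg_right (hbE j) (hw j)

/-- a function continuous on `Ioc a b` with a right limit at `a` is integrable on `Ioc a b`. -/
lemma integrableOn_Ioc_of_right_limit {u : ℝ → ℝ} {a b L : ℝ}
    (hc : ContinuousOn u (Ioc a b)) (hl : Tendsto u (𝓝[>] a) (𝓝 L)) :
    IntegrableOn u (Ioc a b) := by
  set v : ℝ → ℝ := fun s => if s ≤ a then L else u s with hv
  have hveq : EqOn v u (Ioc a b) := fun s hs => by
    simp [hv, not_le.mpr hs.1]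
  have hvc : ContinuousOn v (Icc a b) := by
    intro s hs
    rcases lt_or_eq_of_le hs.1 with hsa | hsa
    case inr =>
      subst hsa
      have h1 : Tendsto v (𝓝[Ioi a] a) (𝓝 L) := by
        refine hl.congr' ?_
        filter_upwards [self_mem_nhdsWithin] with z hz
        simp [hv, not_le.mpr (mem_Ioi.mp hz)]
      have hIcc : Icc a b ⊆ insert a (Ioi a) := by
        intro z hz
        rcases lt_or_eq_of_le hz.1 with h | h
        · exact mem_insert_of_mem _ h
        · rw [← h]; exact mem_insert _ _
      have h2 : Tendsto v (𝓝[insert a (Ioi a)] a) (𝓝 L) := by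
        rw [nhdsWithin_insert]
        refine Tendsto.sup ?_ h1
        simpa [hv] using tendsto_pure_nhds v a
      have hvs : v a = L := by simp [hv]
      rw [ContinuousWithinAt, hvs]
      exact h2.mono_left (nhdsWithin_mono _ hIcc)
    case inl =>
      have h1 : ContinuousWithinAt u (Ioc a b) s := hc s ⟨hsa, hs.2⟩
      have h2 : ContinuousWithinAt v (Ioc a b) s :=
        h1.congr hveq (hveq ⟨hsa, hs.2⟩)
      refine h2.mono_of_mem_nhdsWithin ?_
      rw [mem_nhdsWithin]
      exact ⟨Ioi a, isOpen_Ioi, hsa, fun z hz => ⟨hz.1, hz.2.2⟩⟩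
  have hvi : IntegrableOn v (Icc a b) := hvc.integrableOn_Icc
  exact (hvi.mono_set Ioc_subset_Icc_self).congr_fun hveq measurableSet_Ioc

/-- Dini-type comparison: `V b ≤ V a + ∫ φ`. -/
lemma seg_integral {V φ : ℝ → ℝ} {a b : ℝ} (hab : a ≤ b)
    (hV : ContinuousOn V (Icc a b)) (hφ : ContinuousOn φ (Icc a b))
    (hslope : ∀ x ∈ Ico a b, ∀ r, φ x < r → ∃ᶠ z in 𝓝[>] x, slope V x z < r) :
    V b ≤ V a + ∫ s in a..b, φ s := by
  have key : ∀ ⦃x⦄, x ∈ Icc a b → V x ≤ V a + ∫ s in a..x, φ s := by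
    refine image_le_of_liminf_slope_right_le_deriv_boundary hV ?_ ?_ ?_ hslope
    · simp
    · refine ContinuousOn.add continuousOn_const ?_
      have h1 : IntegrableOn φ (uIcc a b) := by
        rw [uIcc_of_le hab]; exact hφ.integrableOn_Icc
      have := intervalIntegral.continuousOn_primitive_interval h1
      rwa [uIcc_of_le hab] at this
    · intro x hx
      have hxb : x < b := hx.2
      have h1 : IntervalIntegrable φ volume a x := by
        apply ContinuousOn.intervalIntegrable
        rw [uIcc_of_le hx.1]
        exact hφ.mono (Icc_subset_Icc_right hxb.le)
      have hcw : ContinuousWithinAt φ (Ici x) x := by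
        have h2 : ContinuousWithinAt φ (Icc x b) x :=
          (hφ x ⟨hx.1, hxb.le⟩).mono (Icc_subset_Icc_left hx.1)
        rwa [ContinuousWithinAt, nhdsWithin_Icc_eq_nhdsGE hxb] at h2
      have hmeas : StronglyMeasurableAtFilter φ (𝓝[Ioi x] x) volume := by
        refine ⟨Icc a b, ?_, (hφ.aestronglyMeasurable measurableSet_Icc)⟩
        rw [mem_nhdsWithin]
        exact ⟨Iio b, isOpen_Iio, hxb,
          by rintro z ⟨hz1, hz2⟩; exact ⟨hx.1.trans (le_of_lt hz2), le_of_lt hz1⟩⟩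
      exact (intervalIntegral.integral_hasDerivWithinAt_right h1 hmeas
        (hcw.mono Ioi_subset_Ici_self)).const_add (V a)
  exact key ⟨hab, le_refl b⟩

/-- Dini-type Grönwall: `V b ≤ V a * exp (-lam (b - a))`. -/
lemma seg_exp {V : ℝ → ℝ} {a b lam : ℝ} (hab : a ≤ b)
    (hV : ContinuousOn V (Icc a b))
    (hslope : ∀ x ∈ Ico a b, ∀ r, -lam * V x < r → ∃ᶠ z in 𝓝[>] x, slope V x z < r) :
    V b ≤ V a * Real.exp (-lam * (b - a)) := by
  have key := le_gronwallBound_of_liminf_deriv_right_le (f := V) (f' := fun x => -lam * V x)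
    (δ := V a) (K := -lam) (ε := 0) hV ?_ (le_refl _) ?_ b ⟨hab, le_refl b⟩
  · rwa [gronwallBound_ε0] at key
  · intro x hx r hr
    refine (hslope x hx r hr).mono fun z hz => ?_
    rwa [slope_def_field, div_eq_inv_mul] at hz
  · intro x hx; rw [add_zero]

lemma kappa_eq {σ : ImpulseSeq} {k : ℕ} {b : ℝ}
    (hb : b ∈ Set.Ioc (σ.t k) (σ.t (k+1))) : σ.kappa (σ.t 0) b = k := by
  have hset : {j : ℕ | 1 ≤ j ∧ σ.t 0 ≤ σ.t j ∧ σ.t j < b} = ↑(Finset.Icc 1 k) := by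
    ext j
    simp only [Set.mem_setOf_eq, Finset.coe_Icc, Set.mem_Icc]
    constructor
    · rintro ⟨h1, _, h3⟩
      refine ⟨h1, ?_⟩
      by_contra h
      push_neg at h
      have h4 : σ.t (k+1) ≤ σ.t j := σ.mono.monotone h
      have := hb.2
      linarith
    · rintro ⟨h1, h2⟩
      exact ⟨h1, σ.mono.monotone (Nat.zero_le j),
        lt_of_le_of_lt (σ.mono.monotone h2) hb.1⟩
  rw [ImpulseSeq.kappa, hset, Set.ncard_coe_finset, Nat.card_Icc]
  omega

lemma kappa_t0 (σ : ImpulseSeq) : σ.kappa (σ.t 0) (σ.t 0) = 0 := by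
  have hset : {j : ℕ | 1 ≤ j ∧ σ.t 0 ≤ σ.t j ∧ σ.t j < σ.t 0} = ∅ := by
    ext j
    simp only [Set.mem_setOf_eq, Set.mem_empty_iff_false, iff_false]
    rintro ⟨_, h2, h3⟩
    linarith
  rw [ImpulseSeq.kappa, hset, Set.ncard_empty]

lemma exists_piece (σ : ImpulseSeq) {s : ℝ} (hs : σ.t 0 < s) :
    ∃ k, s ∈ Set.Ioc (σ.t k) (σ.t (k+1)) := by
  have hex : ∃ N, s ≤ σ.t N := (σ.tendsto_atTop.eventually_ge_atTop s).exists
  classical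
  have hN : s ≤ σ.t (Nat.find hex) := Nat.find_spec hex
  have hN1 : 1 ≤ Nat.find hex := by
    rcases Nat.eq_zero_or_pos (Nat.find hex) with h | h
    · exfalso; rw [h] at hN; linarith
    · exact h
  refine ⟨Nat.find hex - 1, ?_, ?_⟩
  · have h2 := Nat.find_min hex (m := Nat.find hex - 1) (by omega)
    push_neg at h2
    exact h2
  · have h3 : Nat.find hex - 1 + 1 = Nat.find hex := by omega
    rw [h3]; exact hN

/-- limit of `V` along a filter from limits of `χ` and `x`. -/
lemma Vfun_tendsto {n : ℕ} {χ x : ℝ → Fin n → ℝ} {cp xp : Fin n → ℝ} {l : Filter ℝ}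
    (hχ : Tendsto χ l (𝓝 cp)) (hx : Tendsto x l (𝓝 xp)) :
    Tendsto (fun s => ∑ i, χ s i * |x s i|) l (𝓝 (∑ i, cp i * |xp i|)) := by
  refine tendsto_finset_sum _ fun i _ => Tendsto.mul ?_ ?_
  · exact ((continuous_apply i).tendsto cp).comp hχ
  · exact ((continuous_abs.tendsto _).comp (((continuous_apply i).tendsto xp).comp hx))

lemma Vfun_contOn {n : ℕ} {χ x : ℝ → Fin n → ℝ} {s : Set ℝ}
    (hχ : ContinuousOn χ s) (hx : ContinuousOn x s) :
    ContinuousOn (fun u => ∑ i, χ u i * |x u i|) s := by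
  refine continuousOn_finset_sum _ fun i _ => ContinuousOn.mul ?_ ?_
  · exact (continuous_apply i).comp_continuousOn hχ
  · exact (continuous_abs.comp (continuous_apply i)).comp_continuousOn hx

/-- the key slope estimate at one point. -/
lemma slope_bound {n p : ℕ} {χ x : ℝ → Fin n → ℝ} {cv : Fin n → ℝ}
    {A : Matrix (Fin n) (Fin n) ℝ} {E : Matrix (Fin n) (Fin p) ℝ} {w : Fin p → ℝ} {s : ℝ}
    (hχ : HasDerivAt χ cv s) (hx : HasDerivAt x (A *ᵥ x s + E *ᵥ w) s)
    (hA : Metzler A) (hE : ∀ i j, 0 ≤ E i j) (hw : ∀ j, 0 ≤ w j) (hχpos : ∀ i, 0 ≤ χ s i) :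
    ∀ r, (∑ j, (cv j + (χ s ᵥ* A) j) * |x s j| + ∑ j, (χ s ᵥ* E) j * w j) < r →
      ∃ᶠ z in 𝓝[>] s, slope (fun u => ∑ i, χ u i * |x u i|) s z < r := by
  intro r hr
  have htd := tendsto_slope_V hχ hx
  have hΦ : (∑ i, (cv i * |x s i| + χ s i * dabs (x s i) ((A *ᵥ x s + E *ᵥ w) i)))
      ≤ ∑ j, (cv j + (χ s ᵥ* A) j) * |x s j| + ∑ j, (χ s ᵥ* E) j * w j := by
    have step1 : ∀ i, χ s i * dabs (x s i) ((A *ᵥ x s + E *ᵥ w) i)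
        ≤ χ s i * ((A *ᵥ fun j => |x s j|) i + (E *ᵥ w) i) := by
      intro i
      refine mul_le_mul_of_nonneg_left ?_ (hχpos i)
      have h1 : dabs (x s i) ((A *ᵥ x s) i + (E *ᵥ w) i)
          ≤ dabs (x s i) ((A *ᵥ x s) i) + (E *ᵥ w) i :=
        dabs_add_le _ _ (mulVec_nonneg E hE hw i)
      have h2 := dabs_mulVec_le hA (x s) i
      calc dabs (x s i) ((A *ᵥ x s + E *ᵥ w) i)
          = dabs (x s i) ((A *ᵥ x s) i + (E *ᵥ w) i) := by rw [Pi.add_apply]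
        _ ≤ dabs (x s i) ((A *ᵥ x s) i) + (E *ᵥ w) i := h1
        _ ≤ (A *ᵥ fun j => |x s j|) i + (E *ᵥ w) i := add_le_add_left h2 _
    calc (∑ i, (cv i * |x s i| + χ s i * dabs (x s i) ((A *ᵥ x s + E *ᵥ w) i)))
        ≤ ∑ i, (cv i * |x s i| + χ s i * ((A *ᵥ fun j => |x s j|) i + (E *ᵥ w) i)) :=
          Finset.sum_le_sum fun i _ => add_le_add_right (step1 i) _
      _ = ∑ i, cv i * |x s i| + (∑ i, χ s i * (A *ᵥ fun j => |x s j|) i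
            + ∑ i, χ s i * (E *ᵥ w) i) := by
          rw [← Finset.sum_add_distrib, ← Finset.sum_add_distrib]
          congr 1; ext i; ring
      _ = ∑ i, cv i * |x s i| + (∑ j, (χ s ᵥ* A) j * |x s j| + ∑ j, (χ s ᵥ* E) j * w j) := by
          rw [sum_mul_mulVec, sum_mul_mulVec]
      _ = ∑ j, (cv j + (χ s ᵥ* A) j) * |x s j| + ∑ j, (χ s ᵥ* E) j * w j := by
          rw [← add_assoc, ← Finset.sum_add_distrib]
          congr 1; congr 1; ext j; ring
  have hev : ∀ᶠ z in 𝓝[>] s, ((∑ i, χ z i * |x z i|) - ∑ i, χ s i * |x s i|) / (z - s) < r :=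
    htd.eventually_lt_const (lt_of_le_of_lt hΦ hr)
  refine (hev.mono fun z hz => ?_).frequently
  rwa [slope_def_field]

/-- limits and continuity for output-type functions. -/
lemma output_contOn {q n p : ℕ} {Cc : ℝ → Matrix (Fin q) (Fin n) ℝ}
    {Fc : ℝ → Matrix (Fin q) (Fin p) ℝ} {x : ℝ → Fin n → ℝ} {wc : ℝ → Fin p → ℝ} {s : Set ℝ}
    (hs : ∀ u ∈ s, (0:ℝ) < u)
    (hCc : ContinuousOn Cc (Ici 0)) (hFc : ContinuousOn Fc (Ici 0))
    (hx : ContinuousOn x s) (hwc : Continuous wc) :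
    ContinuousOn (fun u => ∑ i, (Cc u *ᵥ x u + Fc u *ᵥ wc u) i) s := by
  have hCc' : ContinuousOn Cc s := hCc.mono fun u hu => (hs u hu).le
  have hFc' : ContinuousOn Fc s := hFc.mono fun u hu => (hs u hu).le
  refine continuousOn_finset_sum _ fun i _ => ?_
  simp only [Pi.add_apply, Matrix.mulVec, dotProduct]
  refine ContinuousOn.add (continuousOn_finset_sum _ fun j _ => ContinuousOn.mul ?_ ?_)
    (continuousOn_finset_sum _ fun j _ => ContinuousOn.mul ?_ ?_)
  · exact ((continuous_apply j).comp (continuous_apply i)).comp_continuousOn hCc'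
  · exact (continuous_apply j).comp_continuousOn hx
  · exact ((continuous_apply j).comp (continuous_apply i)).comp_continuousOn hFc'
  · exact ((continuous_apply j).comp hwc).continuousOn

lemma output_tendsto {q n p : ℕ} {Cc : ℝ → Matrix (Fin q) (Fin n) ℝ}
    {Fc : ℝ → Matrix (Fin q) (Fin p) ℝ} {x : ℝ → Fin n → ℝ} {wc : ℝ → Fin p → ℝ}
    {tk : ℝ} {xp : Fin n → ℝ} (htk : 0 ≤ tk)
    (hCc : ContinuousOn Cc (Ici 0)) (hFc : ContinuousOn Fc (Ici 0))
    (hx : Tendsto x (𝓝[>] tk) (𝓝 xp)) (hwc : Continuous wc) :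
    Tendsto (fun u => ∑ i, (Cc u *ᵥ x u + Fc u *ᵥ wc u) i) (𝓝[>] tk)
      (𝓝 (∑ i, (Cc tk *ᵥ xp + Fc tk *ᵥ wc tk) i)) := by
  have hsub : 𝓝[>] tk ≤ 𝓝[Ici 0] tk := nhdsWithin_mono _ fun z hz => le_trans htk (le_of_lt hz)
  have hCc' : Tendsto Cc (𝓝[>] tk) (𝓝 (Cc tk)) := (hCc tk (mem_Ici.mpr htk)).mono_left hsub
  have hFc' : Tendsto Fc (𝓝[>] tk) (𝓝 (Fc tk)) := (hFc tk (mem_Ici.mpr htk)).mono_left hsub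
  have hwc' : Tendsto wc (𝓝[>] tk) (𝓝 (wc tk)) := hwc.continuousAt.tendsto.mono_left nhdsWithin_le_nhds
  refine tendsto_finset_sum _ fun i _ => ?_
  simp only [Pi.add_apply, Matrix.mulVec, dotProduct]
  refine Tendsto.add (tendsto_finset_sum _ fun j _ => Tendsto.mul ?_ ?_)
    (tendsto_finset_sum _ fun j _ => Tendsto.mul ?_ ?_)
  · exact (((continuous_apply j).tendsto _).comp (((continuous_apply i).tendsto _).comp hCc'))
  · exact ((continuous_apply j).tendsto _).comp hx
  · exact (((continuous_apply j).tendsto _).comp (((continuous_apply i).tendsto _).comp hFc'))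
  · exact ((continuous_apply j).tendsto _).comp hwc'

end Aux


section Pieces
open Matrix Filter Set Topology MeasureTheory

/-- On one flow interval, exponential decay from the right limit at the left endpoint. -/
lemma piece_exp {V : ℝ → ℝ} {tk tk1 L lam : ℝ} (_hk : tk < tk1)
    (hVc : ContinuousOn V (Ioc tk tk1))
    (hVlim : Tendsto V (𝓝[>] tk) (𝓝 L))
    (hsl : ∀ s ∈ Ioo tk tk1, ∀ r, -lam * V s < r → ∃ᶠ z in 𝓝[>] s, slope V s z < r) :
    ∀ b ∈ Ioc tk tk1, V b ≤ L * Real.exp (-lam * (b - tk)) := by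
  intro b hb
  have key : ∀ a ∈ Ioo tk b, V b ≤ V a * Real.exp (-lam * (b - a)) := by
    intro a ha
    refine seg_exp ha.2.le (hVc.mono fun z hz => ⟨lt_of_lt_of_le ha.1 hz.1, hz.2.trans hb.2⟩)
      (fun s hs r hr => hsl s ⟨lt_of_lt_of_le ha.1 hs.1, lt_of_lt_of_le hs.2 hb.2⟩ r hr)
  have h2 : Tendsto (fun a => V a * Real.exp (-lam * (b - a))) (𝓝[>] tk)
      (𝓝 (L * Real.exp (-lam * (b - tk)))) := by
    refine hVlim.mul ?_
    have hc : Continuous fun a : ℝ => Real.exp (-lam * (b - a)) := by continuity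
    exact hc.continuousAt.tendsto.mono_left nhdsWithin_le_nhds
  refine ge_of_tendsto h2 ?_
  filter_upwards [Ioo_mem_nhdsGT_of_mem ⟨le_refl tk, hb.1⟩] with a ha
  exact key a ha

/-- On one flow interval, the integral comparison from the right limit at the left endpoint. -/
lemma piece_int {V G W : ℝ → ℝ} {tk tk1 L γ : ℝ} (hk : tk < tk1)
    (hVc : ContinuousOn V (Ioc tk tk1)) (hGc : ContinuousOn G (Ioc tk tk1))
    (hWc : Continuous W)
    (hVlim : Tendsto V (𝓝[>] tk) (𝓝 L))
    (hGint : IntegrableOn G (Ioc tk tk1))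
    (hsl : ∀ s ∈ Ioo tk tk1, ∀ r, γ * W s - G s < r → ∃ᶠ z in 𝓝[>] s, slope V s z < r) :
    ∀ b ∈ Ioc tk tk1, V b + ∫ s in Ioc tk b, G s ≤ L + γ * ∫ s in Ioc tk b, W s := by
  intro b hb
  have hGb : IntegrableOn G (Ioc tk b) := hGint.mono_set (Ioc_subset_Ioc_right hb.2)
  have hWint : ∀ u v : ℝ, IntegrableOn W (Ioc u v) :=
    fun u v => (hWc.integrableOn_Icc).mono_set Ioc_subset_Icc_self
  have key : ∀ a ∈ Ioo tk b,
      V b + ∫ s in Ioc a b, G s ≤ V a + γ * ∫ s in Ioc a b, W s := by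
    intro a ha
    have hsub : Icc a b ⊆ Ioc tk tk1 := fun z hz => ⟨lt_of_lt_of_le ha.1 hz.1, hz.2.trans hb.2⟩
    have hGc' : ContinuousOn G (Icc a b) := hGc.mono hsub
    have h1 := seg_integral (V := V) (φ := fun s => γ * W s - G s) ha.2.le
      (hVc.mono hsub)
      (((hWc.continuousOn).const_smul γ).sub hGc')
      (fun s hs r hr => hsl s ⟨lt_of_lt_of_le ha.1 hs.1, lt_of_lt_of_le hs.2 hb.2⟩ r hr)
    have hWG : IntervalIntegrable W volume a b := hWc.intervalIntegrable _ _
    have hGG : IntervalIntegrable G volume a b := by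
      rw [intervalIntegrable_iff_integrableOn_Ioc_of_le ha.2.le]
      exact hGb.mono_set (Ioc_subset_Ioc_left ha.1.le)
    have heq : (∫ s in a..b, (γ * W s - G s))
        = γ * (∫ s in Ioc a b, W s) - ∫ s in Ioc a b, G s := by
      rw [intervalIntegral.integral_sub (hWG.const_mul γ) hGG,
        intervalIntegral.integral_const_mul, intervalIntegral.integral_of_le ha.2.le,
        intervalIntegral.integral_of_le ha.2.le]
    rw [heq] at h1
    linarith
  have hG0 : Tendsto (fun a => ∫ s in Ioc tk a, G s) (𝓝[>] tk) (𝓝 0) := by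
    have hGicc : IntegrableOn G (Icc tk tk1) := by
      rwa [integrableOn_Icc_iff_integrableOn_Ioc]
    have hcont := intervalIntegral.continuousOn_primitive (f := G) (a := tk) (b := tk1) hGicc
    have h0 : Tendsto (fun u => ∫ s in Ioc tk u, G s) (𝓝[Icc tk tk1] tk)
        (𝓝 (∫ s in Ioc tk tk, G s)) := hcont tk ⟨le_refl tk, hk.le⟩
    rw [Set.Ioc_self] at h0
    simp only [MeasureTheory.Measure.restrict_empty, MeasureTheory.integral_zero_measure] at h0
    refine h0.mono_left ?_
    rw [← nhdsWithin_Ioc_eq_nhdsGT hk]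
    exact nhdsWithin_mono _ Ioc_subset_Icc_self
  have hW0 : Tendsto (fun a => ∫ s in Ioc tk a, W s) (𝓝[>] tk) (𝓝 0) := by
    have hWicc : IntegrableOn W (Icc tk tk1) := hWc.integrableOn_Icc
    have hcont := intervalIntegral.continuousOn_primitive (f := W) (a := tk) (b := tk1) hWicc
    have h0 : Tendsto (fun u => ∫ s in Ioc tk u, W s) (𝓝[Icc tk tk1] tk)
        (𝓝 (∫ s in Ioc tk tk, W s)) := hcont tk ⟨le_refl tk, hk.le⟩
    rw [Set.Ioc_self] at h0
    simp only [MeasureTheory.Measure.restrict_empty, MeasureTheory.integral_zero_measure] at h0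
    refine h0.mono_left ?_
    rw [← nhdsWithin_Ioc_eq_nhdsGT hk]
    exact nhdsWithin_mono _ Ioc_subset_Icc_self
  have htend : Tendsto (fun a => V a + (∫ s in Ioc tk a, G s)
      + γ * ((∫ s in Ioc tk b, W s) - ∫ s in Ioc tk a, W s)) (𝓝[>] tk)
      (𝓝 (L + 0 + γ * ((∫ s in Ioc tk b, W s) - 0))) :=
    ((hVlim.add hG0).add ((tendsto_const_nhds.sub hW0).const_mul γ))
  have hev : ∀ᶠ a in 𝓝[>] tk, V b + (∫ s in Ioc tk b, G s) ≤ V a + (∫ s in Ioc tk a, G s)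
      + γ * ((∫ s in Ioc tk b, W s) - ∫ s in Ioc tk a, W s) := by
    filter_upwards [Ioo_mem_nhdsGT_of_mem ⟨le_refl tk, hb.1⟩] with a ha
    have hsplitG : (∫ s in Ioc tk b, G s) = (∫ s in Ioc tk a, G s) + ∫ s in Ioc a b, G s := by
      rw [← MeasureTheory.setIntegral_union (Set.Ioc_disjoint_Ioc_of_le le_rfl) measurableSet_Ioc
        (hGb.mono_set (Ioc_subset_Ioc_right ha.2.le)) (hGb.mono_set (Ioc_subset_Ioc_left ha.1.le)),
        Set.Ioc_union_Ioc_eq_Ioc ha.1.le ha.2.le]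
    have hsplitW : (∫ s in Ioc tk b, W s) = (∫ s in Ioc tk a, W s) + ∫ s in Ioc a b, W s := by
      rw [← MeasureTheory.setIntegral_union (Set.Ioc_disjoint_Ioc_of_le le_rfl) measurableSet_Ioc
        (hWint tk a) (hWint a b), Set.Ioc_union_Ioc_eq_Ioc ha.1.le ha.2.le]
    have hkey := key a ha
    rw [hsplitG, hsplitW]
    linarith
  have hfin : V b + (∫ s in Ioc tk b, G s)
      ≤ L + 0 + γ * ((∫ s in Ioc tk b, W s) - 0) := ge_of_tendsto htend hev
  linarith

end Pieces

/-- The linear sum-separable copositive Lyapunov conditions with slack `ε` guarantee uniform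
exponential stability and the hybrid `L₁×ℓ₁` performance level `γ`. -/
theorem hybrid_L1_performance_suff {n pc pd qc qd : ℕ} (hn : 0 < n) (σ : ImpulseSeq)
    (At : ℝ → Matrix (Fin n) (Fin n) ℝ) (Ec : ℝ → Matrix (Fin n) (Fin pc) ℝ)
    (Cc : ℝ → Matrix (Fin qc) (Fin n) ℝ) (Fc : ℝ → Matrix (Fin qc) (Fin pc) ℝ)
    (J : ℕ → Matrix (Fin n) (Fin n) ℝ) (Ed : ℕ → Matrix (Fin n) (Fin pd) ℝ)
    (Cd : ℕ → Matrix (Fin qd) (Fin n) ℝ) (Fd : ℕ → Matrix (Fin qd) (Fin pd) ℝ)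
    (hA : ContinuousOn At (Set.Ici 0)) (hEc : ContinuousOn Ec (Set.Ici 0))
    (hCc : ContinuousOn Cc (Set.Ici 0)) (hFc : ContinuousOn Fc (Set.Ici 0))
    (hAb : ∃ M, ∀ t ∈ Set.Ici (0 : ℝ), ∀ i j, |At t i j| ≤ M)
    (hEcb : ∃ M, ∀ t ∈ Set.Ici (0 : ℝ), ∀ i j, |Ec t i j| ≤ M)
    (hCcb : ∃ M, ∀ t ∈ Set.Ici (0 : ℝ), ∀ i j, |Cc t i j| ≤ M)
    (hFcb : ∃ M, ∀ t ∈ Set.Ici (0 : ℝ), ∀ i j, |Fc t i j| ≤ M)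
    (hJb : ∃ M, ∀ k, ∀ i j, |J k i j| ≤ M)
    (hEdb : ∃ M, ∀ k, ∀ i j, |Ed k i j| ≤ M)
    (hCdb : ∃ M, ∀ k, ∀ i j, |Cd k i j| ≤ M)
    (hFdb : ∃ M, ∀ k, ∀ i j, |Fd k i j| ≤ M)
    (hAM : ∀ t : ℝ, 0 ≤ t → Metzler (At t))
    (hEcp : ∀ t : ℝ, 0 ≤ t → ∀ i j, 0 ≤ Ec t i j)
    (hCcp : ∀ t : ℝ, 0 ≤ t → ∀ i j, 0 ≤ Cc t i j)
    (hFcp : ∀ t : ℝ, 0 ≤ t → ∀ i j, 0 ≤ Fc t i j)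
    (hJp : ∀ k : ℕ, 1 ≤ k → ∀ i j, 0 ≤ J k i j)
    (hEdp : ∀ k : ℕ, 1 ≤ k → ∀ i j, 0 ≤ Ed k i j)
    (hCdp : ∀ k : ℕ, 1 ≤ k → ∀ i j, 0 ≤ Cd k i j)
    (hFdp : ∀ k : ℕ, 1 ≤ k → ∀ i j, 0 ≤ Fd k i j)
    (χ1 χ2 : Fin n → ℝ) (hχ1 : ∀ i, 0 < χ1 i) (hχ12 : ∀ i, χ1 i ≤ χ2 i)
    (ε γ : ℝ) (hε : 0 < ε) (hγ : 0 < γ)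
    (χ χ' : ℝ → Fin n → ℝ) (χp : ℕ → Fin n → ℝ)
    (hpc : PiecewiseC1 σ χ χ' χp)
    (hbound : ∀ s : ℝ, σ.t 0 ≤ s → ∀ i, χ1 i ≤ χ s i ∧ χ s i ≤ χ2 i)
    (hflow : ∀ k, ∀ s ∈ Set.Ioo (σ.t k) (σ.t (k + 1)),
      ∀ j, (χ' s + χ s ᵥ* At s + (fun _ => (1 : ℝ)) ᵥ* Cc s) j ≤ -ε)
    (hjump : ∀ k : ℕ, 1 ≤ k →
      ∀ j, (χp k ᵥ* J k - χ (σ.t k) + (fun _ => (1 : ℝ)) ᵥ* Cd k) j ≤ -ε)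
    (hperfc : ∀ s : ℝ, σ.t 0 ≤ s →
      ∀ j, (χ s ᵥ* Ec s + (fun _ => (1 : ℝ)) ᵥ* Fc s) j - γ ≤ -ε)
    (hperfd : ∀ k : ℕ, 1 ≤ k →
      ∀ j, (χp k ᵥ* Ed k + (fun _ => (1 : ℝ)) ᵥ* Fd k) j - γ ≤ -ε) :
    (∃ (M α ρ : ℝ), 0 < M ∧ 0 < α ∧ ρ ∈ Set.Ioo (0 : ℝ) 1 ∧
      ∀ x : ℝ → Fin n → ℝ,
        IsTrajectory σ At Ec J Ed (fun _ => 0) (fun _ => 0) x →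
        ∀ s : ℝ, σ.t 0 ≤ s →
          norm1 (x s) ≤ M * (ρ ^ (σ.kappa (σ.t 0) s) *
            (Real.exp (-(α * (s - σ.t 0))) * norm1 (x (σ.t 0))))) ∧
    (∀ (wc : ℝ → Fin pc → ℝ) (wd : ℕ → Fin pd → ℝ) (x : ℝ → Fin n → ℝ),
      Continuous wc →
      (∀ s i, 0 ≤ wc s i) → (∀ k i, 0 ≤ wd k i) →
      IntegrableOn (fun s => ∑ i, wc s i) (Set.Ici (σ.t 0)) →
      Summable (fun k : ℕ => ∑ i, wd (k + 1) i) →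
      IsTrajectory σ At Ec J Ed wc wd x →
      x (σ.t 0) = 0 →
      IntegrableOn (fun s => ∑ i, (Cc s *ᵥ x s + Fc s *ᵥ wc s) i) (Set.Ici (σ.t 0)) ∧
      Summable (fun k : ℕ => ∑ i, (Cd (k + 1) *ᵥ x (σ.t (k + 1)) + Fd (k + 1) *ᵥ wd (k + 1)) i) ∧
      (∫ s in Set.Ici (σ.t 0), ∑ i, (Cc s *ᵥ x s + Fc s *ᵥ wc s) i) +
          ∑' k : ℕ, ∑ i, (Cd (k + 1) *ᵥ x (σ.t (k + 1)) + Fd (k + 1) *ᵥ wd (k + 1)) i ≤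
        γ * ((∫ s in Set.Ici (σ.t 0), ∑ i, wc s i) + ∑' k : ℕ, ∑ i, wd (k + 1) i)) := by

  classical
  obtain ⟨hχcont, hχderiv, _hχ'cont, hχ0, hχjump⟩ := hpc
  have i0 : Fin n := ⟨0, hn⟩
  have hne : (Finset.univ : Finset (Fin n)).Nonempty := ⟨i0, Finset.mem_univ i0⟩
  set c1 : ℝ := Finset.univ.inf' hne χ1 with hc1def
  set c2 : ℝ := Finset.univ.sup' hne χ2 with hc2def
  have hc1le : ∀ i, c1 ≤ χ1 i := fun i => Finset.inf'_le _ (Finset.mem_univ i)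
  have hc2ge : ∀ i, χ2 i ≤ c2 := fun i => Finset.le_sup' _ (Finset.mem_univ i)
  have hc1pos : 0 < c1 := by
    obtain ⟨i, _, hi⟩ := Finset.exists_mem_eq_inf' hne χ1
    rw [hc1def, hi]; exact hχ1 i
  have hc2pos : 0 < c2 := lt_of_lt_of_le (hχ1 i0) ((hχ12 i0).trans (hc2ge i0))
  set ε' : ℝ := min ε (c2/2) with hε'def
  have hε'pos : 0 < ε' := lt_min hε (by positivity)
  have hε'ε : ε' ≤ ε := min_le_left _ _
  have hε'c2 : ε' ≤ c2/2 := min_le_right _ _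
  set lam : ℝ := ε' / c2 with hlamdef
  have hlampos : 0 < lam := div_pos hε'pos hc2pos
  have hlamhalf : lam ≤ 1/2 := by
    rw [hlamdef, div_le_iff₀ hc2pos]; linarith
  set ρ : ℝ := 1 - lam with hρdef
  have hρpos : 0 < ρ := by rw [hρdef]; linarith
  have hρlt1 : ρ < 1 := by rw [hρdef]; linarith
  have hlamle : ∀ r : ℝ, 0 ≤ r → r ≤ c2 → lam * r ≤ ε' := by
    intro r h0 h2
    calc lam * r ≤ lam * c2 := mul_le_mul_of_nonneg_left h2 hlampos.le
      _ = ε' := by rw [hlamdef, div_mul_cancel₀ _ hc2pos.ne']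
  -- time facts
  have ht00 : (0:ℝ) ≤ σ.t 0 := σ.t0_nonneg
  have ht0k : ∀ k, σ.t 0 ≤ σ.t k := fun k => σ.mono.monotone (Nat.zero_le k)
  have htnn : ∀ k, (0:ℝ) ≤ σ.t k := fun k => ht00.trans (ht0k k)
  have htlt : ∀ k, σ.t k < σ.t (k+1) := fun k => σ.mono (Nat.lt_succ_self k)
  -- χ positivity and bounds
  have hχposOn : ∀ s, σ.t 0 ≤ s → ∀ i, 0 ≤ χ s i :=
    fun s hs i => le_trans (hχ1 i).le (hbound s hs i).1
  have hχle : ∀ s, σ.t 0 ≤ s → ∀ i, χ s i ≤ c2 :=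
    fun s hs i => le_trans (hbound s hs i).2 (hc2ge i)
  have hχpbnd : ∀ k, 1 ≤ k → ∀ i, χ1 i ≤ χp k i ∧ χp k i ≤ χ2 i := by
    intro k hk i
    have hlim : Tendsto (fun s => χ s i) (𝓝[>] σ.t k) (𝓝 (χp k i)) :=
      ((continuous_apply i).tendsto _).comp (hχjump k hk)
    constructor
    · refine ge_of_tendsto hlim ?_
      filter_upwards [self_mem_nhdsWithin] with s hs
      exact (hbound s ((ht0k k).trans (le_of_lt hs)) i).1
    · refine le_of_tendsto hlim ?_
      filter_upwards [self_mem_nhdsWithin] with s hs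
      exact (hbound s ((ht0k k).trans (le_of_lt hs)) i).2
  have hχppos : ∀ k, 1 ≤ k → ∀ i, 0 ≤ χp k i :=
    fun k hk i => le_trans (hχ1 i).le (hχpbnd k hk i).1
  have hχple : ∀ k, 1 ≤ k → ∀ i, χp k i ≤ c2 :=
    fun k hk i => le_trans (hχpbnd k hk i).2 (hc2ge i)
  -- specialized inequalities with slack ε'
  have hflow' : ∀ k, ∀ s ∈ Set.Ioo (σ.t k) (σ.t (k + 1)), ∀ j,
      χ' s j + (χ s ᵥ* At s) j ≤ -ε' - ((fun _ => (1:ℝ)) ᵥ* Cc s) j := by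
    intro k s hs j
    have := hflow k s hs j
    simp only [Pi.add_apply] at this
    linarith
  have hjump' : ∀ k, 1 ≤ k → ∀ j,
      (χp k ᵥ* J k) j ≤ χ (σ.t k) j - ((fun _ => (1:ℝ)) ᵥ* Cd k) j - ε' := by
    intro k hk j
    have := hjump k hk j
    simp only [Pi.add_apply, Pi.sub_apply] at this
    linarith
  have hperfc' : ∀ s, σ.t 0 ≤ s → ∀ j,
      (χ s ᵥ* Ec s) j ≤ γ - ((fun _ => (1:ℝ)) ᵥ* Fc s) j - ε' := by
    intro s hs j
    have := hperfc s hs j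
    simp only [Pi.add_apply] at this
    linarith
  have hperfd' : ∀ k, 1 ≤ k → ∀ j,
      (χp k ᵥ* Ed k) j ≤ γ - ((fun _ => (1:ℝ)) ᵥ* Fd k) j - ε' := by
    intro k hk j
    have := hperfd k hk j
    simp only [Pi.add_apply] at this
    linarith
  constructor
  · -- PART (i): exponential stability
    refine ⟨c2/c1, lam, ρ, by positivity, hlampos, ⟨hρpos, hρlt1⟩, ?_⟩
    intro x htraj s hs
    obtain ⟨hxc, hxd, hx0, hxj⟩ := htraj
    -- the Lyapunov function
    set V : ℝ → ℝ := fun u => ∑ i, χ u i * |x u i| with hVdef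
    -- slope estimate
    have hsl : ∀ k, ∀ u ∈ Set.Ioo (σ.t k) (σ.t (k+1)), ∀ r, -lam * V u < r →
        ∃ᶠ z in 𝓝[>] u, slope V u z < r := by
      intro k u hu r hr
      have hu0 : (0:ℝ) ≤ u := le_trans (htnn k) hu.1.le
      have hut0 : σ.t 0 ≤ u := le_trans (ht0k k) hu.1.le
      refine slope_bound (hχderiv k u hu) (hxd k u hu) (hAM u hu0) (hEcp u hu0)
        (fun j => le_refl 0) (hχposOn u hut0) r (lt_of_le_of_lt ?_ hr)
      have hz : (∑ j : Fin pc, (χ u ᵥ* Ec u) j * (fun _ : ℝ => (0 : Fin pc → ℝ)) u j) = 0 := by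
        simp
      rw [hz, add_zero]
      calc ∑ j, (χ' u j + (χ u ᵥ* At u) j) * |x u j|
          ≤ ∑ j, (-lam * χ u j) * |x u j| := by
            refine Finset.sum_le_sum fun j _ => mul_le_mul_of_nonneg_right ?_ (abs_nonneg _)
            have h1 := hflow' k u hu j
            have h2 := ones_vecMul_nonneg (Cc u) (hCcp u hu0) j
            have h3 := hlamle (χ u j) (hχposOn u hut0 j) (hχle u hut0 j)
            linarith
        _ = -lam * V u := by
            rw [hVdef, Finset.mul_sum]
            refine Finset.sum_congr rfl fun j _ => by ring
    -- limits at the impulse times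
    have hVlim0 : Tendsto V (𝓝[>] σ.t 0) (𝓝 (V (σ.t 0))) :=
      Vfun_tendsto (Tendsto.mono_left hχ0 (nhdsWithin_mono _ Ioi_subset_Ici_self))
        (Tendsto.mono_left hx0 (nhdsWithin_mono _ Ioi_subset_Ici_self))
    have hVlim : ∀ k, 1 ≤ k → Tendsto V (𝓝[>] σ.t k)
        (𝓝 (∑ i, χp k i * |(J k *ᵥ x (σ.t k)) i|)) := by
      intro k hk
      have hx' := hxj k hk
      have hsimp : (J k *ᵥ x (σ.t k) + Ed k *ᵥ (fun _ => (0:Fin pd → ℝ)) k)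
          = J k *ᵥ x (σ.t k) := by simp
      rw [hsimp] at hx'
      exact Vfun_tendsto (hχjump k hk) hx'
    -- jump estimate
    have hjmp : ∀ k, 1 ≤ k →
        (∑ i, χp k i * |(J k *ᵥ x (σ.t k)) i|) ≤ ρ * V (σ.t k) := by
      intro k hk
      have h0 : J k *ᵥ x (σ.t k) = J k *ᵥ x (σ.t k) + Ed k *ᵥ (0 : Fin pd → ℝ) := by simp
      rw [h0]
      have hest := jump_est (xk := x (σ.t k)) (w := (0 : Fin pd → ℝ)) (J := J k) (Ed := Ed k)
        (χp := χp k) (aJ := fun j => ρ * χ (σ.t k) j) (aF := fun j => γ)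
        (hJp k hk) (hEdp k hk) (fun j => le_refl (0:ℝ)) (hχppos k hk) ?_ ?_
      · calc (∑ i, χp k i * |(J k *ᵥ x (σ.t k) + (Ed k) *ᵥ (0:Fin pd → ℝ)) i|)
            ≤ ∑ j, (ρ * χ (σ.t k) j) * |x (σ.t k) j| + ∑ j, γ * (0:Fin pd → ℝ) j := hest
          _ = ρ * V (σ.t k) := by
              simp only [Pi.zero_apply, mul_zero, Finset.sum_const_zero, add_zero]
              rw [hVdef, Finset.mul_sum]
              exact Finset.sum_congr rfl fun j _ => by ring
      · intro j
        have h1 := hjump' k hk j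
        have h2 := ones_vecMul_nonneg (Cd k) (hCdp k hk) j
        have h3 := hlamle (χ (σ.t k) j) (hχposOn _ (ht0k k) j) (hχle _ (ht0k k) j)
        have h4 : ρ * χ (σ.t k) j = χ (σ.t k) j - lam * χ (σ.t k) j := by rw [hρdef]; ring
        show (χp k ᵥ* J k) j ≤ ρ * χ (σ.t k) j
        linarith
      · intro j
        have h1 := hperfd' k hk j
        have h2 := ones_vecMul_nonneg (Fd k) (hFdp k hk) j
        show (χp k ᵥ* Ed k) j ≤ γ
        linarith
    -- main decay estimate by induction over the pieces
    have hdec : ∀ k, ∀ b ∈ Set.Ioc (σ.t k) (σ.t (k+1)),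
        V b ≤ ρ^k * (Real.exp (-(lam * (b - σ.t 0))) * V (σ.t 0)) := by
      intro k
      induction k with
      | zero =>
        intro b hb
        have h1 := piece_exp (htlt 0) (Vfun_contOn (hχcont 0) (hxc 0)) hVlim0 (hsl 0) b hb
        rw [pow_zero, one_mul]
        calc V b ≤ V (σ.t 0) * Real.exp (-lam * (b - σ.t 0)) := h1
          _ = Real.exp (-(lam * (b - σ.t 0))) * V (σ.t 0) := by rw [neg_mul]; ring
      | succ k ih =>
        intro b hb
        have h1 := piece_exp (htlt (k+1)) (Vfun_contOn (hχcont (k+1)) (hxc (k+1)))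
          (hVlim (k+1) (by omega)) (hsl (k+1)) b hb
        have h2 := hjmp (k+1) (by omega)
        have h3 := ih (σ.t (k+1)) ⟨htlt k, le_refl _⟩
        have hE1 : (0:ℝ) ≤ Real.exp (-lam * (b - σ.t (k+1))) := (Real.exp_pos _).le
        have e1 : V b ≤ (ρ * V (σ.t (k+1))) * Real.exp (-lam * (b - σ.t (k+1))) :=
          h1.trans (mul_le_mul_of_nonneg_right h2 hE1)
        have e2 : ρ * V (σ.t (k+1))
            ≤ ρ * (ρ^k * (Real.exp (-(lam * (σ.t (k+1) - σ.t 0))) * V (σ.t 0))) :=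
          mul_le_mul_of_nonneg_left h3 hρpos.le
        have e3 : V b ≤ ρ * (ρ^k * (Real.exp (-(lam * (σ.t (k+1) - σ.t 0))) * V (σ.t 0)))
            * Real.exp (-lam * (b - σ.t (k+1))) :=
          e1.trans (mul_le_mul_of_nonneg_right e2 hE1)
        have hexp : Real.exp (-(lam * (σ.t (k+1) - σ.t 0))) * Real.exp (-lam * (b - σ.t (k+1)))
            = Real.exp (-(lam * (b - σ.t 0))) := by
          rw [← Real.exp_add]; congr 1; ring
        calc V b ≤ ρ * (ρ^k * (Real.exp (-(lam * (σ.t (k+1) - σ.t 0))) * V (σ.t 0)))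
            * Real.exp (-lam * (b - σ.t (k+1))) := e3
          _ = ρ^(k+1) * ((Real.exp (-(lam * (σ.t (k+1) - σ.t 0)))
              * Real.exp (-lam * (b - σ.t (k+1)))) * V (σ.t 0)) := by ring
          _ = ρ^(k+1) * (Real.exp (-(lam * (b - σ.t 0))) * V (σ.t 0)) := by rw [hexp]
    -- conclude
    have hnorm1nn : ∀ v : Fin n → ℝ, 0 ≤ norm1 v :=
      fun v => Finset.sum_nonneg fun i _ => abs_nonneg _
    rcases eq_or_lt_of_le hs with heq | hlt
    · rw [← heq, kappa_t0, sub_self, mul_zero, neg_zero, Real.exp_zero, pow_zero]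
      rw [one_mul, one_mul]
      have hM1 : (1:ℝ) ≤ c2/c1 := by
        rw [le_div_iff₀ hc1pos, one_mul]
        exact (hc1le i0).trans ((hχ12 i0).trans (hc2ge i0))
      nlinarith [hnorm1nn (x (σ.t 0))]
    · obtain ⟨k, hk⟩ := exists_piece σ hlt
      rw [kappa_eq hk]
      have h1 := hdec k s hk
      have hst0 : σ.t 0 ≤ s := hs
      have hlow : c1 * norm1 (x s) ≤ V s := by
        rw [hVdef, norm1, Finset.mul_sum]
        refine Finset.sum_le_sum fun i _ => mul_le_mul_of_nonneg_right
          ((hc1le i).trans (hbound s hst0 i).1) (abs_nonneg _)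
      have hup : V (σ.t 0) ≤ c2 * norm1 (x (σ.t 0)) := by
        rw [hVdef, norm1, Finset.mul_sum]
        refine Finset.sum_le_sum fun i _ => mul_le_mul_of_nonneg_right
          ((hbound (σ.t 0) (le_refl _) i).2.trans (hc2ge i)) (abs_nonneg _)
      have hEnn : (0:ℝ) ≤ Real.exp (-(lam * (s - σ.t 0))) := (Real.exp_pos _).le
      have hρk : (0:ℝ) ≤ ρ^k := pow_nonneg hρpos.le k
      have h2 : V s ≤ ρ^k * (Real.exp (-(lam * (s - σ.t 0))) * (c2 * norm1 (x (σ.t 0)))) :=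
        h1.trans (mul_le_mul_of_nonneg_left (mul_le_mul_of_nonneg_left hup hEnn) hρk)
      have h3 : c1 * norm1 (x s)
          ≤ c2 * (ρ^k * (Real.exp (-(lam * (s - σ.t 0))) * norm1 (x (σ.t 0)))) := by
        have heqq : ρ^k * (Real.exp (-(lam * (s - σ.t 0))) * (c2 * norm1 (x (σ.t 0))))
            = c2 * (ρ^k * (Real.exp (-(lam * (s - σ.t 0))) * norm1 (x (σ.t 0)))) := by ring
        linarith
      rw [div_mul_eq_mul_div, le_div_iff₀ hc1pos]
      linarith
  · -- PART (ii): hybrid performance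

    intro wc wd x hwc hwc0 hwd0 hWint hWdsum htraj hx00
    obtain ⟨hxc, hxd, hx0, hxj⟩ := htraj
    set V : ℝ → ℝ := fun u => ∑ i, χ u i * |x u i| with hVdef
    set Gf : ℝ → ℝ := fun u => ∑ i, ((Cc u *ᵥ fun j => |x u j|) + Fc u *ᵥ wc u) i with hGfdef
    set Wf : ℝ → ℝ := fun u => ∑ i, wc u i with hWfdef
    set Df : ℕ → ℝ := fun k => ∑ i, ((Cd k *ᵥ fun j => |x (σ.t k) j|) + Fd k *ᵥ wd k) i with hDfdef
    set WD : ℕ → ℝ := fun k => ∑ i, wd k i with hWDdef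
    have hV0 : V (σ.t 0) = 0 := by rw [hVdef]; simp [hx00]
    have hWcont : Continuous Wf := continuous_finset_sum _ fun i _ => (continuous_apply i).comp hwc
    have hWnn : ∀ u, 0 ≤ Wf u := fun u => Finset.sum_nonneg fun i _ => hwc0 u i
    have hVnn : ∀ u, σ.t 0 ≤ u → 0 ≤ V u := fun u hu =>
      Finset.sum_nonneg fun i _ => mul_nonneg (hχposOn u hu i) (abs_nonneg _)
    have hGnn : ∀ u, (0:ℝ) ≤ u → 0 ≤ Gf u := by
      intro u hu
      refine Finset.sum_nonneg fun i _ => ?_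
      have h1 : 0 ≤ (Cc u *ᵥ fun j => |x u j|) i :=
        mulVec_nonneg _ (hCcp u hu) (fun j => abs_nonneg _) i
      have h2 : 0 ≤ (Fc u *ᵥ wc u) i := mulVec_nonneg _ (hFcp u hu) (fun j => hwc0 u j) i
      simpa using add_nonneg h1 h2
    have hDnn : ∀ k, 1 ≤ k → 0 ≤ Df k := by
      intro k hk
      refine Finset.sum_nonneg fun i _ => ?_
      have h1 : 0 ≤ (Cd k *ᵥ fun j => |x (σ.t k) j|) i :=
        mulVec_nonneg _ (hCdp k hk) (fun j => abs_nonneg _) i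
      have h2 : 0 ≤ (Fd k *ᵥ wd k) i := mulVec_nonneg _ (hFdp k hk) (fun j => hwd0 k j) i
      simpa using add_nonneg h1 h2
    have hWDnn : ∀ k, 0 ≤ WD k := fun k => Finset.sum_nonneg fun i _ => hwd0 k i
    -- |x| as a vector-valued function
    have habsc : ∀ k, ContinuousOn (fun u => fun j => |x u j|) (Set.Ioc (σ.t k) (σ.t (k+1))) :=
      fun k => continuousOn_pi.mpr fun j =>
        continuous_abs.comp_continuousOn ((continuous_apply j).comp_continuousOn (hxc k))
    have habst : ∀ {l : Filter ℝ} {xq : Fin n → ℝ}, Tendsto x l (𝓝 xq) →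
        Tendsto (fun u => fun j => |x u j|) l (𝓝 (fun j => |xq j|)) :=
      fun h => tendsto_pi_nhds.mpr fun j =>
        (continuous_abs.tendsto _).comp (((continuous_apply j).tendsto _).comp h)
    have hxlim : ∀ k, ∃ xq, Tendsto x (𝓝[>] σ.t k) (𝓝 xq) := by
      intro k
      rcases Nat.eq_zero_or_pos k with rfl | hk
      · exact ⟨x (σ.t 0), Tendsto.mono_left hx0 (nhdsWithin_mono _ Ioi_subset_Ici_self)⟩
      · exact ⟨_, hxj k hk⟩
    have hpos : ∀ k, ∀ u ∈ Set.Ioc (σ.t k) (σ.t (k+1)), (0:ℝ) < u :=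
      fun k u hu => lt_of_le_of_lt (htnn k) hu.1
    have hGcont : ∀ k, ContinuousOn Gf (Set.Ioc (σ.t k) (σ.t (k+1))) :=
      fun k => output_contOn (hpos k) hCc hFc (habsc k) hwc
    have hGpiece : ∀ k, IntegrableOn Gf (Set.Ioc (σ.t k) (σ.t (k+1))) := by
      intro k
      obtain ⟨xq, hxq⟩ := hxlim k
      exact integrableOn_Ioc_of_right_limit (hGcont k)
        (output_tendsto (htnn k) hCc hFc (habst hxq) hwc)
    -- slope estimate
    have hsl2 : ∀ k, ∀ u ∈ Set.Ioo (σ.t k) (σ.t (k+1)), ∀ r, γ * Wf u - Gf u < r →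
        ∃ᶠ z in 𝓝[>] u, slope V u z < r := by
      intro k u hu r hr
      have hu0 : (0:ℝ) ≤ u := le_trans (htnn k) hu.1.le
      have hut0 : σ.t 0 ≤ u := le_trans (ht0k k) hu.1.le
      refine slope_bound (hχderiv k u hu) (hxd k u hu) (hAM u hu0) (hEcp u hu0)
        (fun j => hwc0 u j) (hχposOn u hut0) r (lt_of_le_of_lt ?_ hr)
      have hstep1 : ∑ j, (χ' u j + (χ u ᵥ* At u) j) * |x u j|
          ≤ -∑ i, (Cc u *ᵥ fun j => |x u j|) i := by
        rw [sum_mulVec_eq, ← Finset.sum_neg_distrib]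
        refine Finset.sum_le_sum fun j _ => ?_
        have h1 := hflow' k u hu j
        have h2 : χ' u j + (χ u ᵥ* At u) j ≤ -((fun _ => (1:ℝ)) ᵥ* Cc u) j := by linarith
        have := mul_le_mul_of_nonneg_right h2 (abs_nonneg (x u j))
        linarith [this]
      have hstep2 : ∑ j, (χ u ᵥ* Ec u) j * wc u j
          ≤ γ * Wf u - ∑ i, (Fc u *ᵥ wc u) i := by
        rw [sum_mulVec_eq (Fc u) (wc u)]
        have h1 : ∑ j, (χ u ᵥ* Ec u) j * wc u j
            ≤ ∑ j, (γ - ((fun _ => (1:ℝ)) ᵥ* Fc u) j) * wc u j := by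
          refine Finset.sum_le_sum fun j _ => mul_le_mul_of_nonneg_right ?_ (hwc0 u j)
          have := hperfc' u hut0 j
          linarith
        have h2 : ∑ j, (γ - ((fun _ => (1:ℝ)) ᵥ* Fc u) j) * wc u j
            = γ * Wf u - ∑ j, ((fun _ => (1:ℝ)) ᵥ* Fc u) j * wc u j := by
          rw [hWfdef, Finset.mul_sum, ← Finset.sum_sub_distrib]
          exact Finset.sum_congr rfl fun j _ => by ring
        linarith
      have hGsplit : Gf u = (∑ i, (Cc u *ᵥ fun j => |x u j|) i) + ∑ i, (Fc u *ᵥ wc u) i := by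
        simp only [hGfdef, Pi.add_apply, Finset.sum_add_distrib]
      linarith
    have hVlim0 : Tendsto V (𝓝[>] σ.t 0) (𝓝 (V (σ.t 0))) :=
      Vfun_tendsto (Tendsto.mono_left hχ0 (nhdsWithin_mono _ Ioi_subset_Ici_self))
        (Tendsto.mono_left hx0 (nhdsWithin_mono _ Ioi_subset_Ici_self))
    -- jump estimate
    have hjmp2 : ∀ k, 1 ≤ k →
        (∑ i, χp k i * |(J k *ᵥ x (σ.t k) + Ed k *ᵥ wd k) i|)
          ≤ V (σ.t k) - Df k + γ * WD k := by
      intro k hk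
      have hest := jump_est (xk := x (σ.t k)) (w := wd k) (J := J k) (Ed := Ed k)
        (χp := χp k) (aJ := fun j => χ (σ.t k) j - ((fun _ => (1:ℝ)) ᵥ* Cd k) j)
        (aF := fun j => γ - ((fun _ => (1:ℝ)) ᵥ* Fd k) j)
        (hJp k hk) (hEdp k hk) (fun j => hwd0 k j) (hχppos k hk) ?_ ?_
      · have e1 : ∑ j, (χ (σ.t k) j - ((fun _ => (1:ℝ)) ᵥ* Cd k) j) * |x (σ.t k) j|
            = V (σ.t k) - ∑ i, (Cd k *ᵥ fun j => |x (σ.t k) j|) i := by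
          rw [sum_mulVec_eq, hVdef, ← Finset.sum_sub_distrib]
          exact Finset.sum_congr rfl fun j _ => by ring
        have e2 : ∑ j, (γ - ((fun _ => (1:ℝ)) ᵥ* Fd k) j) * wd k j
            = γ * WD k - ∑ i, (Fd k *ᵥ wd k) i := by
          rw [sum_mulVec_eq, hWDdef, Finset.mul_sum, ← Finset.sum_sub_distrib]
          exact Finset.sum_congr rfl fun j _ => by ring
        have e3 : Df k = (∑ i, (Cd k *ᵥ fun j => |x (σ.t k) j|) i) + ∑ i, (Fd k *ᵥ wd k) i := by
          simp only [hDfdef, Pi.add_apply, Finset.sum_add_distrib]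
        calc (∑ i, χp k i * |(J k *ᵥ x (σ.t k) + Ed k *ᵥ wd k) i|)
            ≤ ∑ j, (χ (σ.t k) j - ((fun _ => (1:ℝ)) ᵥ* Cd k) j) * |x (σ.t k) j|
              + ∑ j, (γ - ((fun _ => (1:ℝ)) ᵥ* Fd k) j) * wd k j := hest
          _ = V (σ.t k) - Df k + γ * WD k := by rw [e1, e2, e3]; ring
      · intro j
        have h1 := hjump' k hk j
        show (χp k ᵥ* J k) j ≤ χ (σ.t k) j - ((fun _ => (1:ℝ)) ᵥ* Cd k) j
        linarith
      · intro j
        have h1 := hperfd' k hk j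
        show (χp k ᵥ* Ed k) j ≤ γ - ((fun _ => (1:ℝ)) ᵥ* Fd k) j
        linarith
    -- main induction
    have hQ : ∀ k, ∀ b ∈ Set.Ioc (σ.t k) (σ.t (k+1)),
        IntegrableOn Gf (Set.Ioc (σ.t 0) b) ∧
        V b + ((∫ s in Set.Ioc (σ.t 0) b, Gf s) + ∑ j ∈ Finset.range k, Df (j+1))
          ≤ γ * ((∫ s in Set.Ioc (σ.t 0) b, Wf s) + ∑ j ∈ Finset.range k, WD (j+1)) := by
      intro k
      induction k with
      | zero =>
        intro b hb
        refine ⟨(hGpiece 0).mono_set (Set.Ioc_subset_Ioc_right hb.2), ?_⟩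
        have h1 := piece_int (htlt 0) (Vfun_contOn (hχcont 0) (hxc 0)) (hGcont 0) hWcont
          hVlim0 (hGpiece 0) (hsl2 0) b hb
        rw [hV0] at h1
        simp only [Finset.range_zero, Finset.sum_empty, add_zero]
        linarith
      | succ k ih =>
        intro b hb
        obtain ⟨hint1, hineq1⟩ := ih (σ.t (k+1)) ⟨htlt k, le_refl _⟩
        have hint2 : IntegrableOn Gf (Set.Ioc (σ.t (k+1)) b) :=
          (hGpiece (k+1)).mono_set (Set.Ioc_subset_Ioc_right hb.2)
        have hintb : IntegrableOn Gf (Set.Ioc (σ.t 0) b) := by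
          rw [← Set.Ioc_union_Ioc_eq_Ioc (ht0k (k+1)) hb.1.le]
          exact hint1.union hint2
        refine ⟨hintb, ?_⟩
        have hk1 : 1 ≤ k + 1 := by omega
        have hVlimk : Tendsto V (𝓝[>] σ.t (k+1))
            (𝓝 (∑ i, χp (k+1) i * |(J (k+1) *ᵥ x (σ.t (k+1)) + Ed (k+1) *ᵥ wd (k+1)) i|)) :=
          Vfun_tendsto (hχjump (k+1) hk1) (hxj (k+1) hk1)
        have h1 := piece_int (htlt (k+1)) (Vfun_contOn (hχcont (k+1)) (hxc (k+1)))
          (hGcont (k+1)) hWcont hVlimk (hGpiece (k+1)) (hsl2 (k+1)) b hb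
        have h2 := hjmp2 (k+1) hk1
        have hWIoc : ∀ u v : ℝ, IntegrableOn Wf (Set.Ioc u v) :=
          fun u v => (hWcont.integrableOn_Icc).mono_set Set.Ioc_subset_Icc_self
        have hsG : (∫ s in Set.Ioc (σ.t 0) b, Gf s)
            = (∫ s in Set.Ioc (σ.t 0) (σ.t (k+1)), Gf s)
              + ∫ s in Set.Ioc (σ.t (k+1)) b, Gf s := by
          rw [← MeasureTheory.setIntegral_union (Set.Ioc_disjoint_Ioc_of_le le_rfl) measurableSet_Ioc
            hint1 hint2, Set.Ioc_union_Ioc_eq_Ioc (ht0k (k+1)) hb.1.le]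
        have hsW : (∫ s in Set.Ioc (σ.t 0) b, Wf s)
            = (∫ s in Set.Ioc (σ.t 0) (σ.t (k+1)), Wf s)
              + ∫ s in Set.Ioc (σ.t (k+1)) b, Wf s := by
          rw [← MeasureTheory.setIntegral_union (Set.Ioc_disjoint_Ioc_of_le le_rfl) measurableSet_Ioc
            (hWIoc _ _) (hWIoc _ _), Set.Ioc_union_Ioc_eq_Ioc (ht0k (k+1)) hb.1.le]
        rw [Finset.sum_range_succ, Finset.sum_range_succ, hsG, hsW]
        have hring : γ * ((∫ s in Set.Ioc (σ.t 0) (σ.t (k+1)), Wf s)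
              + (∫ s in Set.Ioc (σ.t (k+1)) b, Wf s)
              + ((∑ j ∈ Finset.range k, WD (j+1)) + WD (k+1)))
            = γ * ((∫ s in Set.Ioc (σ.t 0) (σ.t (k+1)), Wf s)
                + ∑ j ∈ Finset.range k, WD (j+1))
              + γ * (∫ s in Set.Ioc (σ.t (k+1)) b, Wf s) + γ * WD (k+1) := by ring
        rw [hring]
        linarith
    -- totals
    have hWIci : IntegrableOn Wf (Set.Ici (σ.t 0)) := hWint
    have hWIoi : IntegrableOn Wf (Set.Ioi (σ.t 0)) :=
      (integrableOn_Ici_iff_integrableOn_Ioi).mp hWIci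
    have hIW_le : ∀ b : ℝ, (∫ s in Set.Ioc (σ.t 0) b, Wf s) ≤ ∫ s in Set.Ici (σ.t 0), Wf s := by
      intro b
      rw [MeasureTheory.integral_Ici_eq_integral_Ioi]
      refine MeasureTheory.setIntegral_mono_set hWIoi ?_ ?_
      · exact Filter.Eventually.of_forall fun s => hWnn s
      · exact (Set.Ioc_subset_Ioi_self).eventuallyLE
    have hSum_le : ∀ K : ℕ, (∑ j ∈ Finset.range K, WD (j+1)) ≤ ∑' k, WD (k+1) :=
      fun K => Summable.sum_le_tsum _ (fun j _ => hWDnn (j+1)) hWdsum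
    set R : ℝ := γ * ((∫ s in Set.Ici (σ.t 0), Wf s) + ∑' k, WD (k+1)) with hRdef
    have hbound2 : ∀ k, ∀ b ∈ Set.Ioc (σ.t k) (σ.t (k+1)),
        (∫ s in Set.Ioc (σ.t 0) b, Gf s) + (∑ j ∈ Finset.range k, Df (j+1)) ≤ R := by
      intro k b hb
      have h1 := (hQ k b hb).2
      have hVb : 0 ≤ V b := hVnn b ((ht0k k).trans hb.1.le)
      have h2 : γ * ((∫ s in Set.Ioc (σ.t 0) b, Wf s) + ∑ j ∈ Finset.range k, WD (j+1)) ≤ R := by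
        rw [hRdef]
        exact mul_le_mul_of_nonneg_left (add_le_add (hIW_le b) (hSum_le k)) hγ.le
      linarith
    have hGnn' : ∀ b, 0 ≤ ∫ s in Set.Ioc (σ.t 0) b, Gf s := by
      intro b
      refine MeasureTheory.setIntegral_nonneg measurableSet_Ioc fun s hs => ?_
      exact hGnn s (ht00.trans hs.1.le)
    have hDsum : Summable (fun k => Df (k+1)) := by
      refine summable_of_sum_range_le (c := R) (fun k => hDnn (k+1) (by omega)) (fun K => ?_)
      have := hbound2 K (σ.t (K+1)) ⟨htlt K, le_refl _⟩
      linarith [hGnn' (σ.t (K+1))]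
    have hbtend : Tendsto (fun K : ℕ => σ.t (K+1)) atTop atTop :=
      σ.tendsto_atTop.comp (tendsto_add_atTop_nat 1)
    have hGIoi : IntegrableOn Gf (Set.Ioi (σ.t 0)) := by
      refine MeasureTheory.integrableOn_Ioi_of_intervalIntegral_norm_bounded R (σ.t 0)
        (fun K : ℕ => (hQ K (σ.t (K+1)) ⟨htlt K, le_refl _⟩).1) hbtend ?_
      refine Filter.Eventually.of_forall fun K => ?_
      have he : (∫ s in (σ.t 0)..(σ.t (K+1)), ‖Gf s‖) = ∫ s in Set.Ioc (σ.t 0) (σ.t (K+1)), Gf s := by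
        rw [intervalIntegral.integral_of_le (ht0k (K+1))]
        refine MeasureTheory.setIntegral_congr_fun measurableSet_Ioc fun s hs => ?_
        rw [Real.norm_eq_abs, abs_of_nonneg (hGnn s (ht00.trans hs.1.le))]
      rw [he]
      have := hbound2 K (σ.t (K+1)) ⟨htlt K, le_refl _⟩
      have hDnn' : 0 ≤ ∑ j ∈ Finset.range K, Df (j+1) :=
        Finset.sum_nonneg fun j _ => hDnn (j+1) (by omega)
      linarith
    have hGlim2 : Tendsto (fun K : ℕ => ∫ s in Set.Ioc (σ.t 0) (σ.t (K+1)), Gf s) atTop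
        (𝓝 (∫ s in Set.Ioi (σ.t 0), Gf s)) := by
      have := MeasureTheory.intervalIntegral_tendsto_integral_Ioi (σ.t 0) hGIoi hbtend
      refine this.congr fun K => ?_
      rw [intervalIntegral.integral_of_le (ht0k (K+1))]
    have hDtend : Tendsto (fun K : ℕ => ∑ j ∈ Finset.range K, Df (j+1)) atTop
        (𝓝 (∑' k, Df (k+1))) := hDsum.hasSum.tendsto_sum_nat
    have hfinal : (∫ s in Set.Ioi (σ.t 0), Gf s) + (∑' k, Df (k+1)) ≤ R :=
      le_of_tendsto (hGlim2.add hDtend)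
        (Filter.Eventually.of_forall fun K => hbound2 K (σ.t (K+1)) ⟨htlt K, le_refl _⟩)
    -- the actual output functions
    set Hf : ℝ → ℝ := fun u => ∑ i, (Cc u *ᵥ x u + Fc u *ᵥ wc u) i with hHfdef
    set Zf : ℕ → ℝ := fun k => ∑ i, (Cd k *ᵥ x (σ.t k) + Fd k *ᵥ wd k) i with hZfdef
    have hUnion : Set.Ioi (σ.t 0) = ⋃ k, Set.Ioc (σ.t k) (σ.t (k+1)) := by
      ext z
      simp only [Set.mem_Ioi, Set.mem_iUnion]
      constructor
      · intro hz; exact exists_piece σ hz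
      · rintro ⟨k, hk⟩; exact lt_of_le_of_lt (ht0k k) hk.1
    have hHcont : ∀ k, ContinuousOn Hf (Set.Ioc (σ.t k) (σ.t (k+1))) :=
      fun k => output_contOn (hpos k) hCc hFc (hxc k) hwc
    have hHmeas : AEStronglyMeasurable Hf (volume.restrict (Set.Ioi (σ.t 0))) := by
      rw [hUnion]
      exact aestronglyMeasurable_iUnion_iff.mpr fun k =>
        ((hHcont k).aestronglyMeasurable measurableSet_Ioc)
    have hHabs : ∀ s, σ.t 0 ≤ s → |Hf s| ≤ Gf s := by
      intro s hs
      have hs0 : (0:ℝ) ≤ s := ht00.trans hs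
      rw [hHfdef, hGfdef]
      calc |∑ i, (Cc s *ᵥ x s + Fc s *ᵥ wc s) i|
          ≤ ∑ i, |(Cc s *ᵥ x s + Fc s *ᵥ wc s) i| := Finset.abs_sum_le_sum_abs _ _
        _ ≤ ∑ i, ((Cc s *ᵥ fun j => |x s j|) + Fc s *ᵥ wc s) i := by
          refine Finset.sum_le_sum fun i _ => ?_
          have := abs_mulVec_add_le (Cc s) (Fc s) (hCcp s hs0) (hFcp s hs0) (x s) (wc s)
            (fun j => hwc0 s j) i
          simpa using this
    have hHIoi : IntegrableOn Hf (Set.Ioi (σ.t 0)) := by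
      refine hGIoi.mono' hHmeas ?_
      rw [MeasureTheory.ae_restrict_iff' measurableSet_Ioi]
      refine Filter.Eventually.of_forall fun s hs => ?_
      rw [Real.norm_eq_abs]
      exact hHabs s (le_of_lt hs)
    have hZabs : ∀ k, 1 ≤ k → |Zf k| ≤ Df k := by
      intro k hk
      rw [hZfdef, hDfdef]
      calc |∑ i, (Cd k *ᵥ x (σ.t k) + Fd k *ᵥ wd k) i|
          ≤ ∑ i, |(Cd k *ᵥ x (σ.t k) + Fd k *ᵥ wd k) i| := Finset.abs_sum_le_sum_abs _ _
        _ ≤ ∑ i, ((Cd k *ᵥ fun j => |x (σ.t k) j|) + Fd k *ᵥ wd k) i := by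
          refine Finset.sum_le_sum fun i _ => ?_
          have := abs_mulVec_add_le (Cd k) (Fd k) (hCdp k hk) (hFdp k hk) (x (σ.t k)) (wd k)
            (fun j => hwd0 k j) i
          simpa using this
    have hZsum : Summable (fun k => Zf (k+1)) := by
      refine Summable.of_norm_bounded hDsum (fun k => ?_)
      rw [Real.norm_eq_abs]
      exact hZabs (k+1) (by omega)
    refine ⟨?_, hZsum, ?_⟩
    · rw [integrableOn_Ici_iff_integrableOn_Ioi]
      exact hHIoi
    · have hH_le : (∫ s in Set.Ici (σ.t 0), Hf s) ≤ ∫ s in Set.Ioi (σ.t 0), Gf s := by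
        rw [MeasureTheory.integral_Ici_eq_integral_Ioi]
        refine MeasureTheory.integral_mono_ae hHIoi hGIoi ?_
        show ∀ᵐ s ∂(volume.restrict (Set.Ioi (σ.t 0))), Hf s ≤ Gf s
        rw [MeasureTheory.ae_restrict_iff' measurableSet_Ioi]
        refine Filter.Eventually.of_forall fun s hs => ?_
        exact (le_abs_self _).trans (hHabs s (le_of_lt hs))
      have hZ_le : (∑' k, Zf (k+1)) ≤ ∑' k, Df (k+1) :=
        Summable.tsum_le_tsum (fun k => (le_abs_self _).trans (hZabs (k+1) (by omega))) hZsum hDsum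
      have := hfinal
      rw [hRdef] at this
      linarith
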